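/- arXiv:2511.02075 — 2 statements merged into one kernel-verified Lean document; each statement's English description precedes it below -/
import Mathlib

section
/- Let ω : ℝ → ℝ² be differentiable and n ∈ ℤ² nonzero with n⊥ = (-n₂, n₁). Suppose n⊥ · ω(0) ≠ 0 and define ι(p) = (n · ω(p)) / ((n₁²+n₂²) (n⊥ · ω(p))) on a neighborhood where the denominator is nonzero. Then ι'(0) = (n₁²+n₂²)⁻¹ · (nᵀ A(0) n⊥) / (n⊥ · ω(0))², where A(p) = ω'(p) ω(p)ᵀ - ω(p) ω'(p)ᵀ. -/
/-- Derivative of the rotation number `ι(p) = (n·ω(p)) / ((n₁²+n₂²)(n⊥·ω(p)))`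
at `p = 0` equals `(n₁²+n₂²)⁻¹ (nᵀ A(0) n⊥) / (n⊥·ω(0))²`, where
`A(p) = ω'(p)ω(p)ᵀ - ω(p)ω'(p)ᵀ`. -/
theorem stmt_3 (ω : ℝ → Fin 2 → ℝ) (hω : Differentiable ℝ ω)
    (n₁ n₂ : ℤ) (hn : (n₁, n₂) ≠ (0, 0))
    (hden : dotProduct ![-(n₂:ℝ), (n₁:ℝ)] (ω 0) ≠ 0) :
    letI nv : Fin 2 → ℝ := ![(n₁:ℝ), (n₂:ℝ)]
    letI np : Fin 2 → ℝ := ![-(n₂:ℝ), (n₁:ℝ)]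
    letI A : ℝ → Matrix (Fin 2) (Fin 2) ℝ := fun p =>
      Matrix.vecMulVec (deriv ω p) (ω p) - Matrix.vecMulVec (ω p) (deriv ω p)
    letI ι : ℝ → ℝ := fun p =>
      dotProduct nv (ω p) / (((n₁:ℝ)^2 + (n₂:ℝ)^2) * dotProduct np (ω p))
    deriv ι 0 = ((n₁:ℝ)^2 + (n₂:ℝ)^2)⁻¹ *
      (dotProduct nv ((A 0).mulVec np)) / (dotProduct np (ω 0))^2 := by
  have hc : ((n₁:ℝ)^2 + (n₂:ℝ)^2) ≠ 0 := by
    intro h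
    have h1 : (n₁:ℝ) = 0 := by nlinarith [sq_nonneg (n₁:ℝ), sq_nonneg (n₂:ℝ)]
    have h2 : (n₂:ℝ) = 0 := by nlinarith [sq_nonneg (n₁:ℝ), sq_nonneg (n₂:ℝ)]
    exact hn (Prod.ext (by exact_mod_cast h1) (by exact_mod_cast h2))
  have hden' : -(n₂:ℝ) * ω 0 0 + (n₁:ℝ) * ω 0 1 ≠ 0 := by
    simpa [dotProduct, Fin.sum_univ_two] using hden
  have hd : HasDerivAt ω (deriv ω 0) 0 := (hω 0).hasDerivAt
  have hd' := hasDerivAt_pi.mp hd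
  have hd0 : HasDerivAt (fun p => ω p 0) (deriv ω 0 0) 0 := hd' 0
  have hd1 : HasDerivAt (fun p => ω p 1) (deriv ω 0 1) 0 := hd' 1
  have hnum : HasDerivAt (fun p => (n₁:ℝ) * ω p 0 + (n₂:ℝ) * ω p 1)
      ((n₁:ℝ) * deriv ω 0 0 + (n₂:ℝ) * deriv ω 0 1) 0 :=
    ((hd0.const_mul _).add (hd1.const_mul _))
  have hdenf : HasDerivAt (fun p => ((n₁:ℝ)^2 + (n₂:ℝ)^2) * (-(n₂:ℝ) * ω p 0 + (n₁:ℝ) * ω p 1))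
      (((n₁:ℝ)^2 + (n₂:ℝ)^2) * (-(n₂:ℝ) * deriv ω 0 0 + (n₁:ℝ) * deriv ω 0 1)) 0 :=
    ((hd0.const_mul _).add (hd1.const_mul _)).const_mul _
  have hden0 : ((n₁:ℝ)^2 + (n₂:ℝ)^2) * (-(n₂:ℝ) * ω 0 0 + (n₁:ℝ) * ω 0 1) ≠ 0 :=
    mul_ne_zero hc hden'
  have hdiv := hnum.div hdenf hden0
  have hι : (fun p => dotProduct ![(n₁:ℝ), (n₂:ℝ)] (ω p) /
      (((n₁:ℝ)^2 + (n₂:ℝ)^2) * dotProduct ![-(n₂:ℝ), (n₁:ℝ)] (ω p)))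
      = fun p => ((n₁:ℝ) * ω p 0 + (n₂:ℝ) * ω p 1) /
      (((n₁:ℝ)^2 + (n₂:ℝ)^2) * (-(n₂:ℝ) * ω p 0 + (n₁:ℝ) * ω p 1)) := by
    funext p
    simp [dotProduct, Fin.sum_univ_two]
  rw [hι, ← Pi.div_def, hdiv.deriv]
  simp only [Matrix.mulVec, Matrix.vecMulVec_apply, Matrix.sub_apply,
    dotProduct, Fin.sum_univ_two, Matrix.cons_val_zero, Matrix.cons_val_one,
    Matrix.head_cons]
  rw [div_eq_div_iff (pow_ne_zero 2 hden0) (pow_ne_zero 2 hden')]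
  field_simp [hc]
  ring
end

section
/- (Section-independence of the nontwist condition) Let ω : ℝ → ℝ² be twice differentiable with ω(0) having nonzero components and irrational component ratio. For nonzero n ∈ ℤ², define ι_n(p) = (n·ω(p))/((n₁²+n₂²)(n⊥·ω(p))). If for some nonzero n one has ι_n'(0) = 0 and ι_n''(0) ≠ 0, then for every nonzero ñ ∈ ℤ², ι_ñ'(0) = 0 and ι_ñ''(0) ≠ 0. -/
/-- The rotation number `ι_n(p) = (n·ω(p)) / ((n₁²+n₂²)(n⊥·ω(p)))` associated to
the section with winding numbers `n = (n₁,n₂)`. -/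
noncomputable def iotaRot (ω : ℝ → Fin 2 → ℝ) (n₁ n₂ : ℤ) (p : ℝ) : ℝ :=
  ((n₁:ℝ) * ω p 0 + (n₂:ℝ) * ω p 1) /
    (((n₁:ℝ)^2 + (n₂:ℝ)^2) * (-(n₂:ℝ) * ω p 0 + (n₁:ℝ) * ω p 1))

/-- the Wronskian-type quantity `ω₁'ω₂ - ω₁ω₂'` -/
noncomputable def Wr (ω : ℝ → Fin 2 → ℝ) (p : ℝ) : ℝ :=
  deriv ω p 0 * ω p 1 - ω p 0 * deriv ω p 1

theorem hasDerivAt_app (f : ℝ → Fin 2 → ℝ) (p : ℝ) (hf : DifferentiableAt ℝ f p)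
    (i : Fin 2) : HasDerivAt (fun x => f x i) (deriv f p i) p := by
  have h := hasFDerivAt_pi'.1 hf.hasDerivAt.hasFDerivAt i
  simpa using h.hasDerivAt

theorem g_ne {a b : ℝ} (h2 : b ≠ 0) (hirr : Irrational (a / b))
    {n₁ n₂ : ℤ} (hn : (n₁, n₂) ≠ (0, 0)) : -(n₂:ℝ) * a + (n₁:ℝ) * b ≠ 0 := by
  intro heq
  have hne : n₁ ≠ 0 ∨ n₂ ≠ 0 := by
    by_contra hc
    push_neg at hc
    exact hn (by simp [hc.1, hc.2])
  by_cases hn2 : n₂ = 0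
  · have hn1 : n₁ ≠ 0 := by tauto
    have : (n₁:ℝ) * b = 0 := by rw [hn2] at heq; push_cast at heq; linarith
    rcases mul_eq_zero.1 this with h | h
    · exact hn1 (by exact_mod_cast h)
    · exact h2 h
  · have hn2' : (n₂:ℝ) ≠ 0 := Int.cast_ne_zero.2 hn2
    apply hirr
    refine ⟨(n₁:ℚ) / (n₂:ℚ), ?_⟩
    push_cast
    field_simp
    linarith [heq]

theorem csq_ne {n₁ n₂ : ℤ} (hn : (n₁, n₂) ≠ (0, 0)) : ((n₁:ℝ)^2 + (n₂:ℝ)^2) ≠ 0 := by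
  intro hc
  have h1 := sq_nonneg (n₁:ℝ)
  have h2 := sq_nonneg (n₂:ℝ)
  have e1 : (n₁:ℝ)^2 = 0 := by linarith
  have e2 : (n₂:ℝ)^2 = 0 := by linarith
  have : (n₁:ℝ) = 0 := by nlinarith
  have : (n₂:ℝ) = 0 := by nlinarith
  exact hn (by aesop)

theorem iota_hasDeriv (ω : ℝ → Fin 2 → ℝ) (hω : Differentiable ℝ ω)
    {n₁ n₂ : ℤ} (hn : (n₁, n₂) ≠ (0, 0)) (p : ℝ)
    (hg : -(n₂:ℝ) * ω p 0 + (n₁:ℝ) * ω p 1 ≠ 0) :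
    HasDerivAt (iotaRot ω n₁ n₂)
      (Wr ω p / (-(n₂:ℝ) * ω p 0 + (n₁:ℝ) * ω p 1)^2) p := by
  have ha := hasDerivAt_app ω p (hω p) 0
  have hb := hasDerivAt_app ω p (hω p) 1
  have hf : HasDerivAt (fun q => (n₁:ℝ) * ω q 0 + (n₂:ℝ) * ω q 1)
      ((n₁:ℝ) * deriv ω p 0 + (n₂:ℝ) * deriv ω p 1) p :=
    (ha.const_mul _).add (hb.const_mul _)
  have hgd : HasDerivAt (fun q => ((n₁:ℝ)^2 + (n₂:ℝ)^2) * (-(n₂:ℝ) * ω q 0 + (n₁:ℝ) * ω q 1))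
      (((n₁:ℝ)^2 + (n₂:ℝ)^2) * (-(n₂:ℝ) * deriv ω p 0 + (n₁:ℝ) * deriv ω p 1)) p :=
    ((ha.const_mul _).add (hb.const_mul _)).const_mul _
  have hc := csq_ne hn
  have hdiv := hf.div hgd (mul_ne_zero hc hg)
  have hval : (((n₁:ℝ) * deriv ω p 0 + (n₂:ℝ) * deriv ω p 1) *
        (((n₁:ℝ)^2 + (n₂:ℝ)^2) * (-(n₂:ℝ) * ω p 0 + (n₁:ℝ) * ω p 1)) -
      ((n₁:ℝ) * ω p 0 + (n₂:ℝ) * ω p 1) *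
        (((n₁:ℝ)^2 + (n₂:ℝ)^2) * (-(n₂:ℝ) * deriv ω p 0 + (n₁:ℝ) * deriv ω p 1))) /
      (((n₁:ℝ)^2 + (n₂:ℝ)^2) * (-(n₂:ℝ) * ω p 0 + (n₁:ℝ) * ω p 1)) ^ 2
      = Wr ω p / (-(n₂:ℝ) * ω p 0 + (n₁:ℝ) * ω p 1)^2 := by
    rw [Wr, div_eq_div_iff (pow_ne_zero _ (mul_ne_zero hc hg)) (pow_ne_zero _ hg)]
    ring
  rw [hval] at hdiv
  exact hdiv

theorem iota_deriv2 (ω : ℝ → Fin 2 → ℝ) (hω : Differentiable ℝ ω)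
    (hω' : Differentiable ℝ (deriv ω)) {n₁ n₂ : ℤ} (hn : (n₁, n₂) ≠ (0, 0))
    (hg0 : -(n₂:ℝ) * ω 0 0 + (n₁:ℝ) * ω 0 1 ≠ 0) (hW0 : Wr ω 0 = 0) :
    deriv (deriv (iotaRot ω n₁ n₂)) 0
      = deriv (Wr ω) 0 / (-(n₂:ℝ) * ω 0 0 + (n₁:ℝ) * ω 0 1)^2 := by
  set g : ℝ → ℝ := fun q => -(n₂:ℝ) * ω q 0 + (n₁:ℝ) * ω q 1 with hgdef
  have hcont : Continuous g :=
    (continuous_const.mul ((continuous_apply (0 : Fin 2)).comp hω.continuous)).add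
      (continuous_const.mul ((continuous_apply (1 : Fin 2)).comp hω.continuous))
  have hev : ∀ᶠ q in nhds 0, g q ≠ 0 := hcont.continuousAt.eventually_ne hg0
  have heq : deriv (iotaRot ω n₁ n₂) =ᶠ[nhds 0] fun q => Wr ω q / (g q) ^ 2 :=
    hev.mono fun q hq => (iota_hasDeriv ω hω hn q hq).deriv
  rw [heq.deriv_eq]
  have ha := hasDerivAt_app ω 0 (hω 0) 0
  have hb := hasDerivAt_app ω 0 (hω 0) 1
  have ha' := hasDerivAt_app (deriv ω) 0 (hω' 0) 0
  have hb' := hasDerivAt_app (deriv ω) 0 (hω' 0) 1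
  have hW : HasDerivAt (Wr ω)
      ((deriv (deriv ω) 0 0 * ω 0 1 + deriv ω 0 0 * deriv ω 0 1) -
        (deriv ω 0 0 * deriv ω 0 1 + ω 0 0 * deriv (deriv ω) 0 1)) 0 :=
    (ha'.mul hb).sub (ha.mul hb')
  have hgd : HasDerivAt g (-(n₂:ℝ) * deriv ω 0 0 + (n₁:ℝ) * deriv ω 0 1) 0 :=
    (ha.const_mul _).add (hb.const_mul _)
  have hg2 : HasDerivAt (fun q => (g q) ^ 2)
      ((2:ℕ) * g 0 ^ (2 - 1) * (-(n₂:ℝ) * deriv ω 0 0 + (n₁:ℝ) * deriv ω 0 1)) 0 :=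
    hgd.pow 2
  have hdiv : HasDerivAt (fun q => Wr ω q / g q ^ 2) _ 0 := hW.div hg2 (pow_ne_zero 2 hg0)
  rw [hdiv.deriv, hW.deriv]
  rw [hW0, zero_mul, sub_zero]
  rw [div_eq_div_iff (pow_ne_zero _ (pow_ne_zero _ hg0)) (pow_ne_zero _ hg0)]
  ring

/-- Section-independence of the nontwist condition: if `ι_n'(0) = 0` and
`ι_n''(0) ≠ 0` for some nonzero `n ∈ ℤ²`, then the same holds for every
nonzero `ñ ∈ ℤ²`. -/
theorem stmt_7 (ω : ℝ → Fin 2 → ℝ)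
    (hω : Differentiable ℝ ω) (hω' : Differentiable ℝ (deriv ω))
    (h1 : ω 0 0 ≠ 0) (h2 : ω 0 1 ≠ 0) (hirr : Irrational (ω 0 0 / ω 0 1))
    (h : ∃ n₁ n₂ : ℤ, (n₁, n₂) ≠ (0, 0) ∧
      deriv (iotaRot ω n₁ n₂) 0 = 0 ∧ deriv (deriv (iotaRot ω n₁ n₂)) 0 ≠ 0) :
    ∀ m₁ m₂ : ℤ, (m₁, m₂) ≠ (0, 0) →
      deriv (iotaRot ω m₁ m₂) 0 = 0 ∧ deriv (deriv (iotaRot ω m₁ m₂)) 0 ≠ 0 := by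
  obtain ⟨n₁, n₂, hn, hd1, hd2⟩ := h
  have hgn : -(n₂:ℝ) * ω 0 0 + (n₁:ℝ) * ω 0 1 ≠ 0 := g_ne h2 hirr hn
  have hW0 : Wr ω 0 = 0 := by
    have e := (iota_hasDeriv ω hω hn 0 hgn).deriv
    rw [hd1] at e
    rcases div_eq_zero_iff.1 e.symm with h | h
    · exact h
    · exact absurd h (pow_ne_zero _ hgn)
  have hWd : deriv (Wr ω) 0 ≠ 0 := by
    intro h0
    apply hd2
    rw [iota_deriv2 ω hω hω' hn hgn hW0, h0, zero_div]
  intro m₁ m₂ hm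
  have hgm : -(m₂:ℝ) * ω 0 0 + (m₁:ℝ) * ω 0 1 ≠ 0 := g_ne h2 hirr hm
  constructor
  · rw [(iota_hasDeriv ω hω hm 0 hgm).deriv, hW0, zero_div]
  · rw [iota_deriv2 ω hω hω' hm hgm hW0]
    exact div_ne_zero hWd (pow_ne_zero _ hgm)
end
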